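/- Let f : [a,b] → ℝ be a C^1, strictly decreasing function with f(b) > 0, and suppose there exist constants 0 < Q_1, α > 0, β ∈ (0,1) with αβ > 1 such that f'(τ) ≤ -Q_1 (f(τ)^α - f(b)^α)^β for all τ ∈ [a,b]. Then with Q_0 = B(β, 1-β)^{1/(αβ-1)} (B the beta function), one has f(τ) ≤ Q_0 (f(a)^{1-αβ} + Q_1(αβ - 1)(τ - a))^{1/(1-αβ)} for all τ ∈ [a,b]. -/

import Mathlib

open MeasureTheory intervalIntegral Set Filter Topology

section ODEAux

lemma ode_Bint_integrable {β : ℝ} (hβ0 : 0 < β) (hβ1 : β < 1) :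
    IntervalIntegrable (fun t : ℝ => t ^ (β - 1) * (1 - t) ^ (-β)) volume 0 1 := by
  have h1 : IntervalIntegrable (fun t : ℝ => t ^ (β - 1) * (1 - t) ^ (-β)) volume 0 (1/2) := by
    apply IntervalIntegrable.mul_continuousOn
    · exact intervalIntegrable_rpow' (by linarith)
    · apply ContinuousOn.rpow_const
      · exact (continuous_const.sub continuous_id).continuousOn
      · intro t ht
        rw [uIcc_of_le (by norm_num)] at ht
        left
        nlinarith [ht.2]
  have h2 : IntervalIntegrable (fun t : ℝ => t ^ (β - 1) * (1 - t) ^ (-β)) volume (1/2) 1 := by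
    have base : IntervalIntegrable (fun x : ℝ => x ^ (-β)) volume 0 (1/2) :=
      intervalIntegrable_rpow' (by linarith)
    have refl : IntervalIntegrable (fun x : ℝ => (1 - x) ^ (-β)) volume (1/2) 1 := by
      have := base.comp_sub_left 1
      norm_num at this
      exact this.symm
    apply IntervalIntegrable.continuousOn_mul refl
    apply ContinuousOn.rpow_const
    · exact continuous_id.continuousOn
    · intro t ht
      rw [uIcc_of_le (by norm_num)] at ht
      left
      nlinarith [ht.1]
  exact h1.trans h2

lemma ode_integral01_mono_ioo {f g : ℝ → ℝ} (hf : IntervalIntegrable f volume 0 1)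
    (hg : IntervalIntegrable g volume 0 1) (h : ∀ x ∈ Ioo (0:ℝ) 1, f x ≤ g x) :
    (∫ x in (0:ℝ)..1, f x) ≤ ∫ x in (0:ℝ)..1, g x := by
  apply integral_mono_ae_restrict (by norm_num) hf hg
  have h01 : ∀ᵐ (x:ℝ) ∂volume, x ≠ 0 ∧ x ≠ 1 := by
    have hset : {x : ℝ | ¬(x ≠ 0 ∧ x ≠ 1)} = {0, 1} := by
      ext x; simp [not_and_or]; tauto
    rw [ae_iff, hset]
    exact ((Set.finite_singleton (1:ℝ)).insert 0).measure_zero volume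
  have h01' := (ae_restrict_of_ae h01 : ∀ᵐ x ∂(volume.restrict (Icc (0:ℝ) 1)), x ≠ 0 ∧ x ≠ 1)
  filter_upwards [h01', ae_restrict_mem measurableSet_Icc] with x hx hmem
  exact h x ⟨lt_of_le_of_ne hmem.1 (Ne.symm hx.1), lt_of_le_of_ne hmem.2 hx.2⟩

lemma ode_phi_contAt {β γ : ℝ} (hγ : 0 < γ) {y : ℝ} (hy0 : 0 ≤ y) (hy1 : y < 1) :
    ContinuousAt (fun y : ℝ => (1 - y ^ γ) ^ (-β)) y := by
  have hin : ContinuousAt (fun y : ℝ => 1 - y ^ γ) y :=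
    continuousAt_const.sub (Real.continuousAt_rpow_const y γ (Or.inr hγ.le))
  apply ContinuousAt.rpow_const hin
  left
  have : y ^ γ < 1 := Real.rpow_lt_one hy0 hy1 hγ
  intro h
  nlinarith [h]

lemma ode_phi_integrable {β γ : ℝ} (hγ : 0 < γ) {x : ℝ} (hx0 : 0 ≤ x) (hx1 : x < 1) :
    IntervalIntegrable (fun y : ℝ => (1 - y ^ γ) ^ (-β)) volume 0 x := by
  apply ContinuousOn.intervalIntegrable
  intro y hy
  rw [uIcc_of_le hx0] at hy
  exact (ode_phi_contAt hγ hy.1 (lt_of_le_of_lt hy.2 hx1)).continuousWithinAt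

lemma ode_phi_one_le {β γ : ℝ} (hβ0 : 0 < β) (hγ : 0 < γ) {y : ℝ} (hy0 : 0 ≤ y) (hy1 : y < 1) :
    (1:ℝ) ≤ (1 - y ^ γ) ^ (-β) := by
  have h1 : y ^ γ < 1 := Real.rpow_lt_one hy0 hy1 hγ
  have h2 : 0 ≤ y ^ γ := Real.rpow_nonneg hy0 γ
  exact Real.one_le_rpow_of_pos_of_le_one_of_nonpos (by linarith) (by linarith) (by linarith)

lemma ode_phi_low {β γ : ℝ} (hβ0 : 0 < β) (hγ : 0 < γ) {x : ℝ} (hx0 : 0 ≤ x) (hx1 : x < 1) :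
    x ≤ ∫ y in (0:ℝ)..x, (1 - y ^ γ) ^ (-β) := by
  have h := integral_mono_on (f := fun _ : ℝ => (1:ℝ))
    (g := fun y : ℝ => (1 - y ^ γ) ^ (-β)) (μ := volume) hx0
    intervalIntegrable_const (ode_phi_integrable hγ hx0 hx1)
    (fun y hy => ode_phi_one_le hβ0 hγ hy.1 (lt_of_le_of_lt hy.2 hx1))
  simpa using h

lemma ode_phi_high {β γ : ℝ} (hβ0 : 0 < β) (hβ1 : β < 1) (hγ : 1 ≤ γ) {x : ℝ}
    (hx0 : 0 < x) (hx1 : x < 1) :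
    (∫ y in (0:ℝ)..x, (1 - y ^ γ) ^ (-β))
      ≤ (∫ t in (0:ℝ)..1, t ^ (β - 1) * (1 - t) ^ (-β)) * x := by
  have hγ0 : 0 < γ := lt_of_lt_of_le one_pos hγ
  have hscale : (∫ y in (0:ℝ)..x, (1 - y ^ γ) ^ (-β))
      = x * ∫ z in (0:ℝ)..1, (1 - (x * z) ^ γ) ^ (-β) := by
    have := smul_integral_comp_mul_left (a := (0:ℝ)) (b := 1)
      (fun y : ℝ => (1 - y ^ γ) ^ (-β)) x
    simp only [mul_one, mul_zero, smul_eq_mul] at this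
    rw [← this]
  rw [hscale, mul_comm _ x]
  apply mul_le_mul_of_nonneg_left _ hx0.le
  apply ode_integral01_mono_ioo
  · apply ContinuousOn.intervalIntegrable
    intro z hz
    rw [uIcc_of_le (by norm_num : (0:ℝ) ≤ 1)] at hz
    have h1 : 0 ≤ x * z := mul_nonneg hx0.le hz.1
    have h2 : x * z < 1 := by nlinarith [hz.2]
    exact ((ode_phi_contAt hγ0 h1 h2).comp
      ((continuous_const.mul continuous_id).continuousAt)).continuousWithinAt
  · exact ode_Bint_integrable hβ0 hβ1
  · intro z hz
    have hz0 := hz.1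
    have hz1 := hz.2
    have hxz : (x * z) ^ γ ≤ z := by
      calc (x * z) ^ γ ≤ z ^ γ :=
            Real.rpow_le_rpow (mul_nonneg hx0.le hz0.le) (by nlinarith) hγ0.le
        _ ≤ z ^ (1:ℝ) := Real.rpow_le_rpow_of_exponent_ge hz0 hz1.le hγ
        _ = z := Real.rpow_one z
    have h1 : (1 - (x*z) ^ γ) ^ (-β) ≤ (1 - z) ^ (-β) :=
      Real.rpow_le_rpow_of_nonpos (by linarith) (by linarith) (by linarith)
    have h2 : (1:ℝ) ≤ z ^ (β - 1) :=
      Real.one_le_rpow_of_pos_of_le_one_of_nonpos hz0 hz1.le (by linarith)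
    calc (1 - (x*z) ^ γ) ^ (-β) ≤ (1 - z) ^ (-β) := h1
      _ ≤ z ^ (β-1) * (1 - z) ^ (-β) :=
          le_mul_of_one_le_left (Real.rpow_nonneg (by linarith) _) h2

lemma ode_deriv_key {α β Q₁ c u u' : ℝ} (hα : 0 < α) (hβ0 : 0 < β) (hβ1 : β < 1)
    (hαβ : 1 < α*β) (hc : 0 < c) (hu : c < u)
    (hu' : u' ≤ -Q₁ * (u^α - c^α)^β) :
    Q₁ * (α*β-1) * c^(α*β-1) ≤
      (1 - ((u/c)^(1-α*β))^(α/(α*β-1)))^(-β) * (u'/c * (1-α*β) * (u/c)^(1-α*β-1)) := by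
  have hupos : 0 < u := hc.trans hu
  have hdc : 0 < u / c := div_pos hupos hc
  have hdc1 : 1 < u / c := (one_lt_div hc).mpr hu
  set w : ℝ := (u/c)^α with hwdef
  have hw1 : 1 < w := Real.one_lt_rpow_iff_of_pos hdc |>.mpr (Or.inl ⟨hdc1, hα⟩)
  have hw0 : 0 < w := lt_trans one_pos hw1
  have hgγ : ((u/c)^(1-α*β))^(α/(α*β-1)) = w⁻¹ := by
    rw [← Real.rpow_mul hdc.le]
    have h1 : (1-α*β)*(α/(α*β-1)) = -α := by
      have hs0 : α*β - 1 ≠ 0 := by nlinarith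
      field_simp
      ring
    rw [h1, Real.rpow_neg hdc.le, hwdef]
  have hφ : (1 - ((u/c)^(1-α*β))^(α/(α*β-1)))^(-β) = (w-1)^(-β) * w^β := by
    rw [hgγ]
    have h1 : 1 - w⁻¹ = (w-1)/w := by field_simp
    rw [h1, Real.div_rpow (by linarith) hw0.le, Real.rpow_neg hw0.le β, div_inv_eq_mul]
  have hd : (u/c)^(1-α*β-1) = (w^β)⁻¹ := by
    have h1 : (1-α*β-1 : ℝ) = -(α*β) := by ring
    rw [h1, Real.rpow_neg hdc.le, hwdef, ← Real.rpow_mul hdc.le]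
  have hY : (u^α - c^α)^β = c^(α*β) * (w-1)^β := by
    have h1 : u^α - c^α = c^α * (w-1) := by
      rw [hwdef, Real.div_rpow hupos.le hc.le]
      have := (Real.rpow_pos_of_pos hc α).ne'
      field_simp
    rw [h1, Real.mul_rpow (Real.rpow_pos_of_pos hc α).le (by linarith),
      ← Real.rpow_mul hc.le]
  have hφpos : (0:ℝ) < (w-1)^(-β) * w^β :=
    mul_pos (Real.rpow_pos_of_pos (by linarith) _) (Real.rpow_pos_of_pos hw0 _)
  have step : Q₁ * (c^(α*β) * (w-1)^β) / c * (α*β-1) * (w^β)⁻¹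
      ≤ u'/c * (1-α*β) * (u/c)^(1-α*β-1) := by
    rw [hd]
    have h2 : u' * (1-α*β) ≥ Q₁ * (c^(α*β) * (w-1)^β) * (α*β-1) := by
      rw [← hY]; nlinarith
    calc Q₁ * (c^(α*β) * (w-1)^β) / c * (α*β-1) * (w^β)⁻¹
        = (Q₁ * (c^(α*β) * (w-1)^β) * (α*β-1)) * ((w^β)⁻¹ / c) := by ring
      _ ≤ (u' * (1-α*β)) * ((w^β)⁻¹ / c) := by
          apply mul_le_mul_of_nonneg_right h2 (by positivity)
      _ = u'/c * (1-α*β) * (w^β)⁻¹ := by ring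
  rw [hφ]
  calc Q₁ * (α*β-1) * c^(α*β-1)
      = ((w-1)^(-β) * w^β) * (Q₁ * (c^(α*β) * (w-1)^β) / c * (α*β-1) * (w^β)⁻¹) := by
        have e1 : (w-1)^(-β) * (w-1)^β = 1 := by
          rw [Real.rpow_neg (by linarith : (0:ℝ) ≤ w-1)]
          exact inv_mul_cancel₀ (Real.rpow_pos_of_pos (by linarith) _).ne'
        have e2 : w^β * (w^β)⁻¹ = 1 := mul_inv_cancel₀ (Real.rpow_pos_of_pos hw0 _).ne'
        have e3 : c^(α*β) / c = c^(α*β-1) := by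
          rw [Real.rpow_sub hc, Real.rpow_one]
        have e4 : ((w-1)^(-β) * w^β) * (Q₁ * (c^(α*β) * (w-1)^β) / c * (α*β-1) * (w^β)⁻¹)
            = Q₁ * (α*β-1) * (c^(α*β)/c) * ((w-1)^(-β) * (w-1)^β) * (w^β * (w^β)⁻¹) := by
          ring
        rw [e4, e1, e2, e3]
        ring
    _ ≤ ((w-1)^(-β) * w^β) * (u'/c * (1-α*β) * (u/c)^(1-α*β-1)) :=
        mul_le_mul_of_nonneg_left step hφpos.le

lemma ode_final_step {α β B X ft : ℝ} (hαβ : 1 < α*β) (hB : 0 < B) (hft : 0 < ft)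
    (hX : 0 < X) (hkey : X ≤ B * ft ^ (1-α*β)) :
    ft ≤ B ^ (1/(α*β-1)) * X ^ (1/(1-α*β)) := by
  have hr : (1:ℝ)/(1-α*β) < 0 := div_neg_of_pos_of_neg one_pos (by linarith)
  have h1 : (B * ft^(1-α*β))^(1/(1-α*β)) ≤ X^(1/(1-α*β)) :=
    Real.rpow_le_rpow_of_nonpos hX hkey hr.le
  have h2 : (B * ft^(1-α*β))^(1/(1-α*β)) = B^(1/(1-α*β)) * ft := by
    rw [Real.mul_rpow hB.le (Real.rpow_pos_of_pos hft _).le,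
      ← Real.rpow_mul hft.le]
    have he : (1-α*β)*(1/(1-α*β)) = 1 := by
      have : (1-α*β) ≠ 0 := by nlinarith
      field_simp
    rw [he, Real.rpow_one]
  rw [h2] at h1
  have h3 : B^(1/(α*β-1)) * (B^(1/(1-α*β)) * ft) ≤ B^(1/(α*β-1)) * X^(1/(1-α*β)) :=
    mul_le_mul_of_nonneg_left h1 (Real.rpow_nonneg hB.le _)
  have h4 : B^(1/(α*β-1)) * B^(1/(1-α*β)) = 1 := by
    rw [← Real.rpow_add hB]
    have : 1/(α*β-1) + 1/(1-α*β) = 0 := by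
      have h5 : (α*β-1) ≠ 0 := by nlinarith
      have h6 : (1-α*β) ≠ 0 := by nlinarith
      field_simp
      ring
    rw [this, Real.rpow_zero]
  calc ft = (B^(1/(α*β-1)) * B^(1/(1-α*β))) * ft := by rw [h4]; ring
    _ = B^(1/(α*β-1)) * (B^(1/(1-α*β)) * ft) := by ring
    _ ≤ B^(1/(α*β-1)) * X^(1/(1-α*β)) := h3

end ODEAux

/-- Upper-bound half of the ODE comparison lemma: if `f' ≤ -Q₁(fᵅ - f(b)ᵅ)^β` with `αβ > 1`,
then with `Q₀ = B(β,1-β)^{1/(αβ-1)}` one has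
`f(τ) ≤ Q₀ (f(a)^{1-αβ} + Q₁(αβ-1)(τ-a))^{1/(1-αβ)}`. -/
theorem stmt5 (a b α β Q₁ : ℝ) (hab : a ≤ b)
    (hQ₁ : 0 < Q₁) (hα : 0 < α) (hβ : β ∈ Set.Ioo (0:ℝ) 1)
    (hαβ : 1 < α * β)
    (f f' : ℝ → ℝ)
    (hderiv : ∀ τ ∈ Set.Icc a b, HasDerivAt f (f' τ) τ)
    (hanti : StrictAntiOn f (Set.Icc a b))
    (hfb : 0 < f b)
    (hbound : ∀ τ ∈ Set.Icc a b, f' τ ≤ -Q₁ * ((f τ) ^ α - (f b) ^ α) ^ β) :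
    ∀ τ ∈ Set.Icc a b,
      f τ ≤ (∫ t in (0:ℝ)..1, t ^ (β - 1) * (1 - t) ^ (-β)) ^ (1/(α*β - 1)) *
        (f a ^ (1 - α*β) + Q₁ * (α*β - 1) * (τ - a)) ^ (1/(1 - α*β)) := by
  obtain ⟨hβ0, hβ1⟩ := hβ
  have hs : (0:ℝ) < α*β - 1 := by linarith
  set γ : ℝ := α / (α*β-1) with hγdef
  have hγ1 : 1 ≤ γ := by
    rw [hγdef, le_div_iff₀ hs]; nlinarith
  have hγ0 : 0 < γ := lt_of_lt_of_le one_pos hγ1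
  set B : ℝ := ∫ t in (0:ℝ)..1, t ^ (β - 1) * (1 - t) ^ (-β) with hBdef
  have hBint := ode_Bint_integrable hβ0 hβ1
  have hB1 : (1:ℝ) ≤ B := by
    have h := ode_integral01_mono_ioo (f := fun _ : ℝ => (1:ℝ))
      intervalIntegrable_const hBint ?_
    · simpa using h
    · intro z hz
      have h2 : (1:ℝ) ≤ z ^ (β - 1) :=
        Real.one_le_rpow_of_pos_of_le_one_of_nonpos hz.1 hz.2.le (by linarith)
      have h3 : (1:ℝ) ≤ (1 - z) ^ (-β) :=
        Real.one_le_rpow_of_pos_of_le_one_of_nonpos (by linarith [hz.2])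
          (by linarith [hz.1]) (by linarith)
      have h4 := mul_le_mul h2 h3 zero_le_one (le_trans zero_le_one h2)
      simpa using h4
  have hBpos : (0:ℝ) < B := lt_of_lt_of_le one_pos hB1
  -- positivity of f on [a,b]
  have hfge : ∀ σ ∈ Set.Icc a b, f b ≤ f σ :=
    fun σ hσ => hanti.antitoneOn hσ ⟨hab, le_rfl⟩ hσ.2
  have hflt : ∀ σ ∈ Set.Icc a b, σ < b → f b < f σ :=
    fun σ hσ h => hanti hσ ⟨hab, le_rfl⟩ h
  have hfpos : ∀ σ ∈ Set.Icc a b, 0 < f σ := fun σ hσ => lt_of_lt_of_le hfb (hfge σ hσ)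
  -- the main bound for t < b
  have main : ∀ t ∈ Set.Icc a b, t < b →
      f a ^ (1-α*β) + Q₁*(α*β-1)*(t-a) ≤ B * (f t) ^ (1-α*β) := by
    intro t ht htb
    have haleb : a < b := lt_of_le_of_lt ht.1 htb
    set c : ℝ := f b with hcdef
    set g : ℝ → ℝ := fun σ => (f σ / c)^(1-α*β) with hgdef
    have hmem : ∀ σ ∈ Set.Icc a t, σ ∈ Set.Icc a b :=
      fun σ hσ => ⟨hσ.1, hσ.2.trans htb.le⟩
    have hgmem : ∀ σ ∈ Set.Icc a t, g σ ∈ Ioo (0:ℝ) 1 := by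
      intro σ hσ
      have h1 : c < f σ := hflt σ (hmem σ hσ) (lt_of_le_of_lt hσ.2 htb)
      constructor
      · exact Real.rpow_pos_of_pos (div_pos (hfb.trans h1) hfb) _
      · exact Real.rpow_lt_one_of_one_lt_of_neg ((one_lt_div hfb).mpr h1) (by linarith)
    set K : ℝ := Q₁ * (α*β-1) * c^(α*β-1) with hKdef
    set F : ℝ → ℝ :=
      fun σ => (∫ y in (0:ℝ)..(g σ), (1 - y^γ)^(-β)) - K * σ with hFdef
    have hF : ∀ σ ∈ Set.Icc a t, HasDerivAt F
        ((1 - (g σ)^γ)^(-β) * (f' σ / c * (1-α*β) * (f σ / c)^(1-α*β-1)) - K) σ := by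
      intro σ hσ
      have hσb := hmem σ hσ
      have hgσ := hgmem σ hσ
      have hg' : HasDerivAt g (f' σ / c * (1-α*β) * (f σ / c)^(1-α*β-1)) σ :=
        ((hderiv σ hσb).div_const c).rpow_const
          (Or.inl (div_pos (hfpos σ hσb) hfb).ne')
      have hΦ : HasDerivAt (fun x => ∫ y in (0:ℝ)..x, (1 - y^γ)^(-β))
          ((1 - (g σ)^γ)^(-β)) (g σ) := by
        apply intervalIntegral.integral_hasDerivAt_right
        · exact ode_phi_integrable hγ0 hgσ.1.le hgσ.2
        · exact ContinuousAt.stronglyMeasurableAtFilter isOpen_Ioo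
            (fun y hy => ode_phi_contAt hγ0 hy.1.le hy.2) (g σ) hgσ
        · exact ode_phi_contAt hγ0 hgσ.1.le hgσ.2
      have hcomp := hΦ.comp σ hg'
      have hlin : HasDerivAt (fun σ : ℝ => K * σ) K σ := by
        simpa using (hasDerivAt_id σ).const_mul K
      exact hcomp.sub hlin
    have hmono : MonotoneOn F (Set.Icc a t) := by
      apply monotoneOn_of_deriv_nonneg (convex_Icc a t)
      · exact fun σ hσ => (hF σ hσ).continuousAt.continuousWithinAt
      · intro σ hσ
        rw [interior_Icc] at hσ
        exact ((hF σ (Ioo_subset_Icc_self hσ)).differentiableAt).differentiableWithinAt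
      · intro σ hσ
        rw [interior_Icc] at hσ
        have hσ' := Ioo_subset_Icc_self hσ
        rw [(hF σ hσ').deriv]
        have hσb := hmem σ hσ'
        have hcu : c < f σ := hflt σ hσb (lt_of_le_of_lt hσ'.2 htb)
        have hkey := ode_deriv_key hα hβ0 hβ1 hαβ hfb hcu (hbound σ hσb)
        rw [sub_nonneg, hKdef]
        calc Q₁ * (α*β-1) * c^(α*β-1)
            ≤ (1 - ((f σ/c)^(1-α*β))^(α/(α*β-1)))^(-β) *
              (f' σ/c * (1-α*β) * (f σ/c)^(1-α*β-1)) := hkey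
          _ = (1 - (g σ)^γ)^(-β) * (f' σ / c * (1-α*β) * (f σ / c)^(1-α*β-1)) := by
              rw [hgdef, hγdef]
      -- done with deriv nonneg
    have haat : a ∈ Set.Icc a t := ⟨le_rfl, ht.1⟩
    have htat : t ∈ Set.Icc a t := ⟨ht.1, le_rfl⟩
    have hFle : F a ≤ F t := hmono haat htat ht.1
    have hga := hgmem a ⟨le_rfl, ht.1⟩
    have hgt := hgmem t ⟨ht.1, le_rfl⟩
    have hlow : g a ≤ ∫ y in (0:ℝ)..(g a), (1 - y^γ)^(-β) :=
      ode_phi_low hβ0 hγ0 hga.1.le hga.2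
    have hhigh : (∫ y in (0:ℝ)..(g t), (1 - y^γ)^(-β)) ≤ B * g t := by
      rw [hBdef]
      exact ode_phi_high hβ0 hβ1 hγ1 hgt.1 hgt.2
    have hchain : g a + K * (t - a) ≤ B * g t := by
      have := hFle
      rw [hFdef] at this
      simp only [] at this
      nlinarith [hlow, hhigh, this]
    -- convert to f-form by multiplying with c^(1-α*β)
    have hcp : (0:ℝ) < c^(1-α*β) := Real.rpow_pos_of_pos hfb _
    have hgτ : ∀ σ, 0 < f σ → g σ * c^(1-α*β) = f σ ^ (1-α*β) := by
      intro σ hfσ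
      simp only [hgdef]
      rw [Real.div_rpow hfσ.le hfb.le]
      field_simp
    have hKc : K * c^(1-α*β) = Q₁ * (α*β-1) := by
      rw [hKdef]
      have : c^(α*β-1) * c^(1-α*β) = 1 := by
        rw [← Real.rpow_add hfb]
        norm_num
      calc Q₁ * (α*β-1) * c^(α*β-1) * c^(1-α*β)
          = Q₁ * (α*β-1) * (c^(α*β-1) * c^(1-α*β)) := by ring
        _ = Q₁ * (α*β-1) := by rw [this, mul_one]
    have hmul := mul_le_mul_of_nonneg_right hchain hcp.le
    rw [add_mul, mul_assoc K] at hmul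
    rw [hgτ a (hfpos a ⟨le_rfl, hab⟩)] at hmul
    have hrw : K * ((t-a) * c^(1-α*β)) = Q₁*(α*β-1)*(t-a) := by
      calc K * ((t-a) * c^(1-α*β)) = (K * c^(1-α*β)) * (t-a) := by ring
        _ = Q₁*(α*β-1)*(t-a) := by rw [hKc]
    rw [hrw] at hmul
    calc f a ^ (1-α*β) + Q₁*(α*β-1)*(t-a) ≤ B * g t * c^(1-α*β) := hmul
      _ = B * (g t * c^(1-α*β)) := by ring
      _ = B * (f t)^(1-α*β) := by rw [hgτ t (hfpos t (hmem t ⟨ht.1, le_rfl⟩))]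
  -- now conclude
  intro τ hτ
  have hXpos : ∀ t, a ≤ t → (0:ℝ) < f a ^ (1-α*β) + Q₁*(α*β-1)*(t-a) := by
    intro t hat
    have h1 : (0:ℝ) < f a ^ (1-α*β) :=
      Real.rpow_pos_of_pos (hfpos a ⟨le_rfl, hab⟩) _
    have h2 : (0:ℝ) ≤ Q₁*(α*β-1)*(t-a) := by
      apply mul_nonneg (mul_nonneg hQ₁.le (by linarith)) (by linarith)
    linarith
  rcases lt_or_eq_of_le hτ.2 with hτb | hτb
  · exact ode_final_step hαβ hBpos (hfpos τ hτ) (hXpos τ hτ.1) (main τ hτ hτb)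
  · -- τ = b
    subst hτb
    rcases lt_or_eq_of_le hab with hab' | hab''
    · -- a < τ = b : limit argument
      have hne : (𝓝[Ioo a τ] τ).NeBot := right_nhdsWithin_Ioo_neBot hab'
      have hev : ∀ᶠ t in 𝓝[Ioo a τ] τ,
          f t ≤ B ^ (1/(α*β-1)) *
            (f a ^ (1-α*β) + Q₁*(α*β-1)*(t-a)) ^ (1/(1-α*β)) := by
        filter_upwards [eventually_mem_nhdsWithin] with t ht
        exact ode_final_step hαβ hBpos (hfpos t ⟨ht.1.le, ht.2.le⟩) (hXpos t ht.1.le)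
          (main t ⟨ht.1.le, ht.2.le⟩ ht.2)
      have hft : Filter.Tendsto f (𝓝[Ioo a τ] τ) (𝓝 (f τ)) :=
        ((hderiv τ hτ).continuousAt.continuousWithinAt).tendsto
      have hXt : Filter.Tendsto (fun t => f a ^ (1-α*β) + Q₁*(α*β-1)*(t-a))
          (𝓝[Ioo a τ] τ) (𝓝 (f a ^ (1-α*β) + Q₁*(α*β-1)*(τ-a))) := by
        apply Filter.Tendsto.mono_left _ nhdsWithin_le_nhds
        exact (continuous_const.add ((continuous_const.mul
          (continuous_id.sub continuous_const)))).tendsto τ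
      have hgt : Filter.Tendsto (fun t => B ^ (1/(α*β-1)) *
          (f a ^ (1-α*β) + Q₁*(α*β-1)*(t-a)) ^ (1/(1-α*β))) (𝓝[Ioo a τ] τ)
          (𝓝 (B ^ (1/(α*β-1)) *
            (f a ^ (1-α*β) + Q₁*(α*β-1)*(τ-a)) ^ (1/(1-α*β)))) := by
        apply Filter.Tendsto.const_mul
        exact (Real.continuousAt_rpow_const _ _ (Or.inl (hXpos τ hτ.1).ne')).tendsto.comp hXt
      exact le_of_tendsto_of_tendsto hft hgt hev
    · -- a = b, τ = b = a
      have hτa : τ = a := hab''.symm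
      rw [hτa]
      have h1 : (f a ^ (1-α*β) + Q₁*(α*β-1)*(a-a)) ^ (1/(1-α*β)) = f a := by
        simp only [sub_self, mul_zero, add_zero]
        rw [← Real.rpow_mul (hfpos a ⟨le_rfl, hab⟩).le]
        have he : (1-α*β) * (1/(1-α*β)) = 1 := by
          have : (1-α*β) ≠ 0 := by nlinarith
          field_simp
        rw [he, Real.rpow_one]
      rw [h1]
      have h2 : (1:ℝ) ≤ B ^ (1/(α*β-1)) := by
        calc (1:ℝ) = 1 ^ (1/(α*β-1)) := (Real.one_rpow _).symm
          _ ≤ B ^ (1/(α*β-1)) :=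
            Real.rpow_le_rpow (by norm_num) hB1 (by positivity)
      nlinarith [hfpos a ⟨le_rfl, hab⟩]
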